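/- There exists a nonnegative real sequence {b_n}_{n≥1} which is an almost monotonic sequence (AMS), satisfies lim_{n→∞} n·b_n = 0, and yet the sine series ∑_{n=1}^∞ b_n sin(nx) does not converge uniformly on ℝ (i.e., its partial sums S_n(x) = ∑_{k=1}^n b_k sin(kx) do not converge uniformly). -/

import Mathlib

open Filter

open Finset Real in
private noncomputable def env (j : ℕ) : ℝ := 1 / (2 ^ j * (j + 1))

private noncomputable def bseq (k : ℕ) : ℝ :=
  env (Nat.log 2 k) * (if k % 4 = 1 then 1 else 1 / 2)

private lemma env_pos (j : ℕ) : 0 < env j := by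
  unfold env; positivity

private lemma env_anti {i j : ℕ} (h : i ≤ j) : env j ≤ env i := by
  unfold env
  apply one_div_le_one_div_of_le
  · positivity
  · have h1 : (2:ℝ)^i ≤ 2^j := by
      apply pow_le_pow_right₀ (by norm_num) h
    have h2 : ((i:ℝ)+1) ≤ (j:ℝ)+1 := by exact_mod_cast by omega
    nlinarith [pow_pos (show (0:ℝ) < 2 by norm_num) i]

private lemma bseq_pos (k : ℕ) : 0 < bseq k := by
  unfold bseq
  have := env_pos (Nat.log 2 k)
  split <;> nlinarith

private lemma bseq_le_env (k : ℕ) : bseq k ≤ env (Nat.log 2 k) := by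
  unfold bseq
  have := env_pos (Nat.log 2 k)
  split <;> nlinarith

private lemma env_le_two_bseq (k : ℕ) : env (Nat.log 2 k) ≤ 2 * bseq k := by
  unfold bseq
  have := env_pos (Nat.log 2 k)
  split <;> nlinarith

private lemma bseq_ams {n k : ℕ} (h : n ≤ k) : bseq k ≤ 2 * bseq n :=
  le_trans (le_trans (bseq_le_env k) (env_anti (Nat.log_mono_right h))) (env_le_two_bseq n)

private lemma log_tendsto : Tendsto (Nat.log 2) atTop atTop := by
  refine tendsto_atTop.2 fun M => eventually_atTop.2 ⟨2 ^ M, fun n hn => ?_⟩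
  have h1 := Nat.one_le_two_pow (n := M)
  have hn0 : n ≠ 0 := by omega
  exact (Nat.le_log_iff_pow_le one_lt_two hn0).2 hn

private lemma bseq_mul_tendsto :
    Tendsto (fun n : ℕ => (n : ℝ) * bseq n) atTop (nhds 0) := by
  have h1 : Tendsto (fun m : ℕ => 2 * (1 / ((m : ℝ) + 1))) atTop (nhds 0) := by
    simpa using (tendsto_one_div_add_atTop_nhds_zero_nat (𝕜 := ℝ)).const_mul 2
  have h2 : Tendsto (fun n : ℕ => 2 * (1 / ((Nat.log 2 n : ℝ) + 1))) atTop (nhds 0) :=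
    h1.comp log_tendsto
  apply squeeze_zero (fun n => mul_nonneg n.cast_nonneg (bseq_pos n).le) _ h2
  intro n
  set j := Nat.log 2 n with hj
  have hlt : (n : ℝ) < 2 ^ (j + 1) := by
    exact_mod_cast Nat.lt_pow_succ_log_self one_lt_two n
  have hb : bseq n ≤ env j := bseq_le_env n
  have hjp : (0:ℝ) < (j:ℝ) + 1 := by positivity
  have h2p : (0:ℝ) < 2 ^ j := by positivity
  have hle : (n : ℝ) * bseq n ≤ 2 ^ (j+1) * env j :=
    mul_le_mul (le_of_lt hlt) hb (le_of_lt (bseq_pos n)) (by positivity)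
  calc (n : ℝ) * bseq n ≤ 2 ^ (j+1) * env j := hle
    _ = 2 * (1 / ((j:ℝ) + 1)) := by
        unfold env; field_simp; ring

open Real in
private lemma sin_nat_mul_pi_div_two (k : ℕ) :
    Real.sin (k * (π / 2)) = (if k % 4 = 1 then 1 else if k % 4 = 3 then -1 else 0) := by
  have hk : k = 4 * (k / 4) + k % 4 := (Nat.div_add_mod k 4).symm
  set q := k / 4
  set r := k % 4 with hr
  have harg : (k : ℝ) * (π / 2) = (r : ℝ) * (π / 2) + (q : ℝ) * (2 * π) := by
    rw [hk]; push_cast; ring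
  rw [harg]
  have hper : Real.sin ((r : ℝ) * (π / 2) + (q : ℝ) * (2 * π)) = Real.sin ((r : ℝ) * (π / 2)) :=
    Real.sin_periodic.nat_mul q ((r : ℝ) * (π / 2))
  rw [hper]
  have hr4 : r < 4 := Nat.mod_lt _ (by norm_num)
  interval_cases r
  · simp
  · norm_num [Real.sin_pi_div_two]
  · norm_num
    rw [show (2:ℝ) * (π/2) = π by ring, Real.sin_pi]
  · norm_num
    rw [show (3:ℝ) * (π/2) = π + π/2 by ring, Real.sin_add, Real.sin_pi, Real.cos_pi,
      Real.sin_pi_div_two]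
    ring

private lemma sum_mod4 (g : ℕ → ℝ) (T : ℕ) :
    ∑ k ∈ Finset.range (4 * T), g (k % 4) = T * (g 0 + g 1 + g 2 + g 3) := by
  induction T with
  | zero => simp
  | succ t ih =>
    have h4 : 4 * (t + 1) = (4 * t) + 1 + 1 + 1 + 1 := by ring
    rw [h4, Finset.sum_range_succ, Finset.sum_range_succ, Finset.sum_range_succ,
      Finset.sum_range_succ, ih]
    have e0 : (4 * t) % 4 = 0 := by omega
    have e1 : (4 * t + 1) % 4 = 1 := by omega
    have e2 : (4 * t + 1 + 1) % 4 = 2 := by omega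
    have e3 : (4 * t + 1 + 1 + 1) % 4 = 3 := by omega
    rw [e0, e1, e2, e3]
    push_cast; ring

private lemma sum_Ico_mod4 (g : ℕ → ℝ) (a T : ℕ) (ha : a % 4 = 0) :
    ∑ k ∈ Finset.Ico a (a + 4 * T), g (k % 4) = T * (g 0 + g 1 + g 2 + g 3) := by
  rw [Finset.sum_Ico_eq_sum_range]
  have h : a + 4 * T - a = 4 * T := by omega
  rw [h, ← sum_mod4 g T]
  apply Finset.sum_congr rfl
  intro k _
  congr 1
  omega

private noncomputable def gfun (r : ℕ) : ℝ :=
  (if r = 1 then 1 else 1 / 2) * (if r = 1 then 1 else if r = 3 then -1 else 0)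

open Real in
private lemma level_sum {j : ℕ} (hj : 2 ≤ j) :
    ∑ k ∈ Finset.Ico (2 ^ j) (2 ^ (j + 1)), bseq k * Real.sin (k * (π / 2))
      = 1 / (8 * ((j : ℝ) + 1)) := by
  obtain ⟨d, rfl⟩ : ∃ d, j = d + 2 := ⟨j - 2, by omega⟩
  have hsplit : 2 ^ (d + 2 + 1) = 2 ^ (d + 2) + 4 * 2 ^ d := by
    rw [pow_add, pow_add]; ring
  have hmod : (2 ^ (d + 2)) % 4 = 0 := by
    rw [pow_add]; omega
  have hterm : ∀ k ∈ Finset.Ico (2 ^ (d + 2)) (2 ^ (d + 2 + 1)),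
      bseq k * Real.sin (k * (π / 2)) = env (d + 2) * gfun (k % 4) := by
    intro k hk
    simp only [Finset.mem_Ico] at hk
    have hlog : Nat.log 2 k = d + 2 := Nat.log_eq_of_pow_le_of_lt_pow hk.1 hk.2
    rw [bseq, hlog, sin_nat_mul_pi_div_two, gfun]
    ring
  rw [Finset.sum_congr rfl hterm, ← Finset.mul_sum, hsplit,
    sum_Ico_mod4 gfun _ _ hmod]
  have hg : gfun 0 + gfun 1 + gfun 2 + gfun 3 = 1 / 2 := by norm_num [gfun]
  rw [hg, env]
  have h2 : (2:ℝ) ^ (d + 2) = 2 ^ d * 4 := by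
    rw [pow_add]; ring
  have hp : (0:ℝ) < 2 ^ d := by positivity
  have hq : (0:ℝ) < ((d:ℝ) + 2) + 1 := by positivity
  rw [h2]
  push_cast
  field_simp
  ring

private lemma decomp (F : ℕ → ℝ) (J t : ℕ) :
    ∑ k ∈ Finset.Ico (2 ^ J) (2 ^ (J + t)), F k
      = ∑ j ∈ Finset.Ico J (J + t), ∑ k ∈ Finset.Ico (2 ^ j) (2 ^ (j + 1)), F k := by
  induction t with
  | zero => simp
  | succ s ih =>
    have h1 : (2:ℕ) ^ J ≤ 2 ^ (J + s) := Nat.pow_le_pow_right (by norm_num) (by omega)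
    have h2 : (2:ℕ) ^ (J + s) ≤ 2 ^ (J + s + 1) := Nat.pow_le_pow_right (by norm_num) (by omega)
    rw [show J + (s+1) = (J + s) + 1 by ring,
      ← Finset.sum_Ico_consecutive F h1 h2, ih,
      Finset.sum_Ico_succ_top (by omega : J ≤ J + s)]

open Real in
private lemma block_sum {J : ℕ} (hJ : 2 ≤ J) :
    (1:ℝ)/16 ≤ ∑ k ∈ Finset.Ico (2 ^ J) (2 ^ (2 * J)), bseq k * Real.sin (k * (π / 2)) := by
  rw [show 2 * J = J + J by ring, decomp]
  have hcard : (Finset.Ico J (J + J)).card = J := by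
    rw [Nat.card_Ico]; omega
  have hJR : (0:ℝ) < (J:ℝ) := by exact_mod_cast by omega
  calc (1:ℝ)/16 = (J:ℝ) * (1 / (16 * (J:ℝ))) := by field_simp
    _ = (Finset.Ico J (J + J)).card • (1 / (16 * (J:ℝ))) := by
        rw [hcard, nsmul_eq_mul]
    _ ≤ ∑ j ∈ Finset.Ico J (J + J),
          ∑ k ∈ Finset.Ico (2 ^ j) (2 ^ (j + 1)), bseq k * Real.sin (k * (π / 2)) := by
        apply Finset.card_nsmul_le_sum
        intro j hj
        simp only [Finset.mem_Ico] at hj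
        rw [level_sum (by omega : 2 ≤ j)]
        apply one_div_le_one_div_of_le
        · positivity
        · have : (j:ℝ) + 1 ≤ 2 * (J:ℝ) := by
            have : j + 1 ≤ 2 * J := by omega
            exact_mod_cast this
          linarith

/-- There exists a nonnegative almost monotonic sequence `b` with `n·bₙ → 0`
whose sine series does not converge uniformly on ℝ. -/
theorem stmt0 :
    ∃ b : ℕ → ℝ,
      (∀ n : ℕ, 1 ≤ n → 0 ≤ b n) ∧
      (∃ C : ℝ, 0 < C ∧ ∀ n k : ℕ, 1 ≤ n → n ≤ k → b k ≤ C * b n) ∧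
      Tendsto (fun n : ℕ => (n : ℝ) * b n) atTop (nhds 0) ∧
      ¬ ∃ f : ℝ → ℝ,
        TendstoUniformly
          (fun (n : ℕ) (x : ℝ) => ∑ k ∈ Finset.Icc 1 n, b k * Real.sin (k * x))
          f atTop := by
  refine ⟨bseq, fun n _ => (bseq_pos n).le, ⟨2, by norm_num, fun n k _ h => bseq_ams h⟩,
    bseq_mul_tendsto, ?_⟩
  rintro ⟨f, hf⟩
  set π := Real.pi
  have hpt : Tendsto (fun n : ℕ => ∑ k ∈ Finset.Icc 1 n, bseq k * Real.sin (k * (π/2)))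
      atTop (nhds (f (π/2))) := hf.tendsto_at (π/2)
  -- partial sum up to 2^t - 1 equals sum over Ico 1 (2^t)
  have hps : ∀ t : ℕ, ∑ k ∈ Finset.Icc 1 (2 ^ t - 1), bseq k * Real.sin (k * (π/2))
      = ∑ k ∈ Finset.Ico 1 (2 ^ t), bseq k * Real.sin (k * (π/2)) := by
    intro t
    have h1 : (1:ℕ) ≤ 2 ^ t := Nat.one_le_two_pow
    have hset : Finset.Icc 1 (2 ^ t - 1) = Finset.Ico 1 (2 ^ t) := by
      rw [← Finset.Ico_add_one_right_eq_Icc]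
      congr 1
      omega
    rw [hset]
  -- subsequence tendsto
  have hsub : ∀ (u : ℕ → ℕ), (∀ J, J ≤ u J) →
      Tendsto (fun J : ℕ => ∑ k ∈ Finset.Icc 1 (2 ^ (u J) - 1),
        bseq k * Real.sin (k * (π/2))) atTop (nhds (f (π/2))) := by
    intro u hu
    refine hpt.comp (tendsto_atTop_mono (f := id) (fun J => ?_) tendsto_id)
    have h := Nat.lt_pow_self (n := u J) one_lt_two
    have := hu J
    simp only [id]
    omega
  have t1 := hsub (fun J => 2 * J) (fun J => by show J ≤ 2 * J; omega)
  have t2 := hsub (fun J => J) (fun J => le_refl J)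
  have hdiff : Tendsto (fun J : ℕ =>
      (∑ k ∈ Finset.Icc 1 (2 ^ (2 * J) - 1), bseq k * Real.sin (k * (π/2)))
        - ∑ k ∈ Finset.Icc 1 (2 ^ J - 1), bseq k * Real.sin (k * (π/2)))
      atTop (nhds 0) := by
    simpa using t1.sub t2
  have hge : ∀ᶠ J : ℕ in atTop, (1:ℝ)/16 ≤
      (∑ k ∈ Finset.Icc 1 (2 ^ (2 * J) - 1), bseq k * Real.sin (k * (π/2)))
        - ∑ k ∈ Finset.Icc 1 (2 ^ J - 1), bseq k * Real.sin (k * (π/2)) := by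
    refine eventually_atTop.2 ⟨2, fun J hJ => ?_⟩
    rw [hps, hps]
    have hle1 : (1:ℕ) ≤ 2 ^ J := Nat.one_le_two_pow
    have hle2 : (2:ℕ) ^ J ≤ 2 ^ (2 * J) := Nat.pow_le_pow_right (by norm_num) (by omega)
    have hcons := Finset.sum_Ico_consecutive
      (fun k : ℕ => bseq k * Real.sin (k * (π/2))) hle1 hle2
    have hblock := block_sum hJ
    linarith
  have hfin : (1:ℝ)/16 ≤ 0 := ge_of_tendsto hdiff hge
  linarith
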